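/- Characterization of fixed points on the special orthogonal group: Let α ≥ 0 and G ∈ SO(d)^{⊗n}. Then G is a fixed point of ST_α (i.e. G ∈ ST_α(G)) if and only if for each i ∈ [n], tr(C̃_iᵀ G G_iᵀ) = ‖C̃_iᵀ G‖_* − 2·s_i·σ_min(C̃_iᵀ G), where σ_min(C̃_iᵀ G) is the smallest singular value of C̃_iᵀ G and s_i = 1 if det(C̃_iᵀ G) < 0 and s_i = 0 otherwise. -/

import Mathlib

open Matrix BigOperators

noncomputable section
namespace GroupSync

variable {n d : ℕ}

/-- Frobenius norm of a real matrix. -/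
def frob {m k : Type*} [Fintype m] [Fintype k] (X : Matrix m k ℝ) : ℝ :=
  Real.sqrt (∑ i, ∑ j, (X i j) ^ 2)

/-- Spectral (operator) norm of a real matrix: the operator norm of the induced
linear map between Euclidean spaces. -/
def spec {m k : Type*} [Fintype m] [Fintype k] [DecidableEq k] (X : Matrix m k ℝ) : ℝ :=
  ‖LinearMap.toContinuousLinearMap (Matrix.toEuclideanLin X)‖

/-- The positive semidefinite square root of a positive semidefinite matrix (the former
`Matrix.PosSemidef.sqrt`, removed from Mathlib; same definition). -/
def psdSqrt {m : Type*} [Fintype m] [DecidableEq m] {A : Matrix m m ℝ} (hA : A.PosSemidef) :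
    Matrix m m ℝ :=
  hA.1.eigenvectorUnitary.1 * diagonal ((↑) ∘ (√·) ∘ hA.1.eigenvalues) *
    (star hA.1.eigenvectorUnitary : Matrix m m ℝ)

/-- Nuclear norm: trace of the positive semidefinite square root of `X * Xᵀ`
(i.e. the sum of the singular values of `X`). -/
def nuclear {m k : Type*} [Fintype m] [Fintype k] [DecidableEq m] (X : Matrix m k ℝ) : ℝ :=
  (psdSqrt (Matrix.posSemidef_self_mul_conjTranspose X)).trace

/-- The positive semidefinite square root of `X * Xᵀ`. -/
def psdSqrtMulT {m k : Type*} [Fintype m] [Fintype k] [DecidableEq m] (X : Matrix m k ℝ) :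
    Matrix m m ℝ :=
  psdSqrt (Matrix.posSemidef_self_mul_conjTranspose X)

/-- Membership in the orthogonal group `O(d)`. -/
def IsOd (g : Matrix (Fin d) (Fin d) ℝ) : Prop :=
  gᵀ * g = 1 ∧ g * gᵀ = 1

/-- Membership in the special orthogonal group `SO(d)`. -/
def IsSOd (g : Matrix (Fin d) (Fin d) ℝ) : Prop :=
  IsOd g ∧ g.det = 1

/-- The `i`-th `d × d` block of an `nd × d` matrix. -/
def blk (X : Matrix (Fin n × Fin d) (Fin d) ℝ) (i : Fin n) : Matrix (Fin d) (Fin d) ℝ :=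
  Matrix.of fun a b => X (i, a) b

/-- Membership in `O(d)^{⊗n}`: every `d × d` block is orthogonal. -/
def OdN (G : Matrix (Fin n × Fin d) (Fin d) ℝ) : Prop :=
  ∀ i : Fin n, IsOd (blk G i)

/-- Membership in `SO(d)^{⊗n}`. -/
def SOdN (G : Matrix (Fin n × Fin d) (Fin d) ℝ) : Prop :=
  ∀ i : Fin n, IsSOd (blk G i)

/-- The `i`-th block column (an `nd × d` matrix) of an `nd × nd` matrix. -/
def bcol (M : Matrix (Fin n × Fin d) (Fin n × Fin d) ℝ) (i : Fin n) :
    Matrix (Fin n × Fin d) (Fin d) ℝ :=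
  Matrix.of fun p b => M p (i, b)

/-- The `ij`-th `d × d` block of an `nd × nd` matrix. -/
def dblk (M : Matrix (Fin n × Fin d) (Fin n × Fin d) ℝ) (i j : Fin n) :
    Matrix (Fin d) (Fin d) ℝ :=
  Matrix.of fun a b => M (i, a) (j, b)

/-- `G' ∈ T_α(G)` (where `Ct = C + α I`): `G' ∈ O(d)^{⊗n}` and each block `G'_i` is a
nearest point of `C̃ᵢᵀ G` in `O(d)` w.r.t. the Frobenius norm. -/
def InT (Ct : Matrix (Fin n × Fin d) (Fin n × Fin d) ℝ)
    (G G' : Matrix (Fin n × Fin d) (Fin d) ℝ) : Prop :=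
  OdN G' ∧ ∀ i : Fin n, ∀ X : Matrix (Fin d) (Fin d) ℝ, IsOd X →
    frob (blk G' i - (bcol Ct i)ᵀ * G) ≤ frob (X - (bcol Ct i)ᵀ * G)

/-- `G' ∈ ST_α(G)`: the `SO(d)` analogue of `InT`. -/
def InST (Ct : Matrix (Fin n × Fin d) (Fin n × Fin d) ℝ)
    (G G' : Matrix (Fin n × Fin d) (Fin d) ℝ) : Prop :=
  SOdN G' ∧ ∀ i : Fin n, ∀ X : Matrix (Fin d) (Fin d) ℝ, IsSOd X →
    frob (blk G' i - (bcol Ct i)ᵀ * G) ≤ frob (X - (bcol Ct i)ᵀ * G)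

/-- The quotient distance `d(X, Y) = min_{g ∈ O(d)} ‖X − Y g‖_F`. -/
def dOrth (X Y : Matrix (Fin n × Fin d) (Fin d) ℝ) : ℝ :=
  ⨅ g : {g : Matrix (Fin d) (Fin d) ℝ // IsOd g}, frob (X - Y * g.1)

/-- The objective function `f(G) = tr(Gᵀ C G)`. -/
def obj (C : Matrix (Fin n × Fin d) (Fin n × Fin d) ℝ)
    (G : Matrix (Fin n × Fin d) (Fin d) ℝ) : ℝ :=
  Matrix.trace (Gᵀ * C * G)

/-- Hadamard (entrywise) product. -/
def had {m k : Type*} (X Y : Matrix m k ℝ) : Matrix m k ℝ :=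
  Matrix.of fun p q => X p q * Y p q

/-- `W ⊗ (1_d 1_dᵀ)`, the Kronecker product of `W` with the all-ones `d × d` matrix. -/
def kron1 (W : Matrix (Fin n) (Fin n) ℝ) : Matrix (Fin n × Fin d) (Fin n × Fin d) ℝ :=
  Matrix.kroneckerMap (· * ·) W (Matrix.of fun (_ _ : Fin d) => (1 : ℝ))

/-- The all-ones matrix `1_m 1_mᵀ`. -/
def onesMat (m : Type*) : Matrix m m ℝ :=
  Matrix.of fun _ _ => (1 : ℝ)

/-- `symblockdiag`: symmetrize the diagonal `d × d` blocks, zero out all other blocks. -/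
def sbd (X : Matrix (Fin n × Fin d) (Fin n × Fin d) ℝ) :
    Matrix (Fin n × Fin d) (Fin n × Fin d) ℝ :=
  Matrix.of fun p q => if p.1 = q.1 then (X p q + X (p.1, q.2) (q.1, p.2)) / 2 else 0

/-- `S(G) = symblockdiag(C G Gᵀ) − C`. -/
def Smat (C : Matrix (Fin n × Fin d) (Fin n × Fin d) ℝ)
    (G : Matrix (Fin n × Fin d) (Fin d) ℝ) : Matrix (Fin n × Fin d) (Fin n × Fin d) ℝ :=
  sbd (C * (G * Gᵀ)) - C

/-- `G` is a second-order critical point of (QP): `S(G) G = 0` and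
`⟨H, S(G) H⟩ ≥ 0` for all tangent directions `H` (blockwise `Hᵢ Gᵢᵀ` skew-symmetric). -/
def IsSOC (C : Matrix (Fin n × Fin d) (Fin n × Fin d) ℝ)
    (G : Matrix (Fin n × Fin d) (Fin d) ℝ) : Prop :=
  Smat C G * G = 0 ∧
  ∀ H : Matrix (Fin n × Fin d) (Fin d) ℝ,
    (∀ i : Fin n, (blk H i * (blk G i)ᵀ)ᵀ = -(blk H i * (blk G i)ᵀ)) →
    0 ≤ Matrix.trace (Hᵀ * (Smat C G * H))

/-- Smallest singular value of a square matrix, as the minimum of `‖M v‖` over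
unit vectors `v`. -/
def sigmaMin (M : Matrix (Fin d) (Fin d) ℝ) : ℝ :=
  ⨅ v : {v : Fin d → ℝ // ∑ a, (v a) ^ 2 = 1}, Real.sqrt (∑ a, (M.mulVec v.1 a) ^ 2)

/-- The singular values of a square matrix: square roots of the eigenvalues of `Mᵀ M`. -/
def singVal (M : Matrix (Fin d) (Fin d) ℝ) (l : Fin d) : ℝ :=
  Real.sqrt ((show (Mᵀ * M).IsHermitian by
    rw [← Matrix.conjTranspose_eq_transpose_of_trivial]; exact Matrix.isHermitian_conjTranspose_mul_self M).eigenvalues l)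

/-- Smallest eigenvalue of a (symmetric) matrix, as the minimum Rayleigh quotient
over unit vectors. -/
def lambdaMin {m : Type*} [Fintype m] (M : Matrix m m ℝ) : ℝ :=
  ⨅ v : {v : m → ℝ // ∑ i, (v i) ^ 2 = 1}, v.1 ⬝ᵥ M.mulVec v.1

/-- `D_α(G)`: block diagonal of the psd square roots of `(C̃ᵢᵀ G)(C̃ᵢᵀ G)ᵀ`, minus `C̃`. -/
def Dmat (Ct : Matrix (Fin n × Fin d) (Fin n × Fin d) ℝ)
    (G : Matrix (Fin n × Fin d) (Fin d) ℝ) : Matrix (Fin n × Fin d) (Fin n × Fin d) ℝ :=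
  (Matrix.of fun p q =>
    if p.1 = q.1 then psdSqrtMulT ((bcol Ct p.1)ᵀ * G) p.2 q.2 else 0) - Ct

/-- The residual function `ρ_α(G) = ‖D_α(G) G‖_F`. -/
def rho (Ct : Matrix (Fin n × Fin d) (Fin n × Fin d) ℝ)
    (G : Matrix (Fin n × Fin d) (Fin d) ℝ) : ℝ :=
  frob (Dmat Ct G * G)

/-- Blockwise infinity norm: `‖X‖_∞ = max_i ‖X_i‖` (spectral norm of the blocks). -/
def binf (X : Matrix (Fin n × Fin d) (Fin d) ℝ) : ℝ :=
  ⨆ i : Fin n, spec (blk X i)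

lemma psdSqrt_posSemidef {m : Type*} [Fintype m] [DecidableEq m] {A : Matrix m m ℝ}
    (hA : A.PosSemidef) : (psdSqrt hA).PosSemidef := by
  unfold psdSqrt
  have : (star hA.1.eigenvectorUnitary : Matrix m m ℝ) = (hA.1.eigenvectorUnitary.1)ᴴ := by
    simp [Matrix.star_eq_conjTranspose]
  rw [this]
  apply Matrix.PosSemidef.mul_mul_conjTranspose_same
  refine Matrix.posSemidef_diagonal_iff.mpr fun i => ?_
  simp [Real.sqrt_nonneg]

lemma psdSqrt_mul_self {m : Type*} [Fintype m] [DecidableEq m] {A : Matrix m m ℝ}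
    (hA : A.PosSemidef) : psdSqrt hA * psdSqrt hA = A := by
  unfold psdSqrt
  have hU : (star hA.1.eigenvectorUnitary : Matrix m m ℝ) * hA.1.eigenvectorUnitary.1 = 1 :=
    Unitary.coe_star_mul_self _
  have hD : diagonal (((↑) : ℝ → ℝ) ∘ (√·) ∘ hA.1.eigenvalues) *
      diagonal (((↑) : ℝ → ℝ) ∘ (√·) ∘ hA.1.eigenvalues) =
      diagonal (RCLike.ofReal ∘ hA.1.eigenvalues) := by
    rw [diagonal_mul_diagonal]; congr 1; funext i
    simp [Real.mul_self_sqrt (hA.eigenvalues_nonneg i)]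
  conv_rhs => rw [hA.1.spectral_theorem]
  rw [Unitary.conjStarAlgAut_apply, ← hD]
  simp only [Matrix.mul_assoc]
  rw [← Matrix.mul_assoc (star hA.1.eigenvectorUnitary : Matrix m m ℝ), hU, Matrix.one_mul]

lemma euc_inner (x y : EuclideanSpace ℝ (Fin d)) :
    (inner ℝ x y : ℝ) = ∑ k, x k * y k := by
  rw [PiLp.inner_apply]
  simp [RCLike.inner_apply, mul_comm]

/-- Extend a partially-defined orthonormal system of rows to an orthogonal matrix. -/

lemma extend_orthonormal (s : Set (Fin d)) (v : Fin d → (Fin d → ℝ))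
    (hv : ∀ i ∈ s, ∀ j ∈ s, (∑ k, v i k * v j k) = if i = j then 1 else 0) :
    ∃ W : Matrix (Fin d) (Fin d) ℝ, IsOd W ∧ ∀ i ∈ s, W i = v i := by
  classical
  set E := EuclideanSpace ℝ (Fin d)
  let v' : Fin d → E := fun i => (WithLp.equiv 2 _).symm (v i)
  have hv' : Orthonormal ℝ (s.restrict v') := by
    rw [orthonormal_iff_ite]
    rintro ⟨i, hi⟩ ⟨j, hj⟩
    have h2 : (inner ℝ (v' i) (v' j) : ℝ) = ∑ k, v i k * v j k := by
      rw [euc_inner]; rfl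
    change inner ℝ (v' i) (v' j) = _
    simp only [Set.restrict_apply, h2, hv i hi j hj]
    by_cases h : i = j <;> simp [h, Subtype.ext_iff]
  obtain ⟨b, hb⟩ := hv'.exists_orthonormalBasis_extension_of_card_eq
    (by simp [E])
  have key : ∀ i j, (∑ k, b i k * b j k) = if i = j then (1:ℝ) else 0 := by
    intro i j
    rw [← euc_inner (b i) (b j), orthonormal_iff_ite.mp b.orthonormal]
  refine ⟨Matrix.of (fun i j => b i j), ⟨?_, ?_⟩, ?_⟩
  · rw [mul_eq_one_comm]
    ext i j
    simpa [Matrix.mul_apply, Matrix.one_apply] using key i j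
  · ext i j
    simpa [Matrix.mul_apply, Matrix.one_apply] using key i j
  · intro i hi
    funext j
    have h3 := hb i hi
    exact congrFun (congrArg (WithLp.equiv 2 _) h3) j

lemma real_spectral {M : Matrix (Fin d) (Fin d) ℝ} (hM : M.IsHermitian) :
    ∃ P : Matrix (Fin d) (Fin d) ℝ, IsOd P ∧ M = P * Matrix.diagonal hM.eigenvalues * Pᵀ := by
  refine ⟨hM.eigenvectorUnitary, ?_, ?_⟩
  · constructor
    · have := (Matrix.mem_unitaryGroup_iff').mp hM.eigenvectorUnitary.2
      simpa [Matrix.star_eq_conjTranspose, Matrix.conjTranspose_eq_transpose_of_trivial] using this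
    · have := (Matrix.mem_unitaryGroup_iff).mp hM.eigenvectorUnitary.2
      simpa [Matrix.star_eq_conjTranspose, Matrix.conjTranspose_eq_transpose_of_trivial] using this
  · have h := hM.spectral_theorem
    simpa [Matrix.star_eq_conjTranspose, Matrix.conjTranspose_eq_transpose_of_trivial] using h

lemma IsOd.transpose {P : Matrix (Fin d) (Fin d) ℝ} (h : IsOd P) : IsOd Pᵀ := by
  constructor
  · rw [Matrix.transpose_transpose]; exact h.2
  · rw [Matrix.transpose_transpose]; exact h.1

lemma exists_svd (A : Matrix (Fin d) (Fin d) ℝ) :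
    ∃ (P Q : Matrix (Fin d) (Fin d) ℝ) (e : Fin d → ℝ),
      IsOd P ∧ IsOd Q ∧ (∀ i, 0 ≤ e i) ∧ A = P * Matrix.diagonal e * Qᵀ ∧
      nuclear A = ∑ i, e i := by
  classical
  have hpsd := Matrix.posSemidef_self_mul_conjTranspose A
  set S := psdSqrt hpsd with hSdef
  have hSpsd : S.PosSemidef := psdSqrt_posSemidef hpsd
  have hSS : S * S = A * Aᵀ := by
    calc S * S = A * Aᴴ := psdSqrt_mul_self hpsd
      _ = A * Aᵀ := by rw [Matrix.conjTranspose_eq_transpose_of_trivial]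
  obtain ⟨P, hP, hSP⟩ := real_spectral hSpsd.1
  set e := hSpsd.1.eigenvalues with he
  have he0 : ∀ i, 0 ≤ e i := hSpsd.eigenvalues_nonneg
  -- B := Pᵀ A has rows orthogonal with norms e i
  set B := Pᵀ * A with hB
  have hBBT : B * Bᵀ = Matrix.diagonal (fun i => e i ^ 2) := by
    have h1 : B * Bᵀ = Pᵀ * (A * Aᵀ) * P := by
      rw [hB]; rw [Matrix.transpose_mul, Matrix.transpose_transpose]; noncomm_ring
    rw [h1, ← hSS, hSP]
    have hPtP : Pᵀ * P = 1 := hP.1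
    have hPPt : P * Pᵀ = 1 := hP.2
    calc Pᵀ * (P * Matrix.diagonal e * Pᵀ * (P * Matrix.diagonal e * Pᵀ)) * P
        = (Pᵀ * P) * Matrix.diagonal e * (Pᵀ * P) * Matrix.diagonal e * (Pᵀ * P) := by
          simp only [Matrix.mul_assoc]
      _ = Matrix.diagonal (fun i => e i ^ 2) := by
          rw [hPtP]; simp [Matrix.diagonal_mul_diagonal, pow_two]
  have hrow : ∀ i j, (∑ k, B i k * B j k) = if i = j then e i ^ 2 else 0 := by
    intro i j
    have : (B * Bᵀ) i j = ∑ k, B i k * B j k := by simp [Matrix.mul_apply]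
    rw [← this, hBBT, Matrix.diagonal_apply]
  have horth : ∀ i ∈ {i | e i ≠ 0}, ∀ j ∈ {i | e i ≠ 0},
      (∑ k, ((e i)⁻¹ • B i) k * ((e j)⁻¹ • B j) k) = if i = j then (1:ℝ) else 0 := by
    intro i hi j hj
    simp only [Set.mem_setOf_eq] at hi hj
    simp only [Pi.smul_apply, smul_eq_mul]
    have h4 : ∑ k, (e i)⁻¹ * B i k * ((e j)⁻¹ * B j k) = (e i)⁻¹ * (e j)⁻¹ * ∑ k, B i k * B j k := by
      rw [Finset.mul_sum]; congr 1; funext k; ring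
    rw [h4, hrow i j]
    by_cases h : i = j
    · subst h; simp [if_pos rfl]; field_simp
    · simp [h]
  obtain ⟨W, hW, hWv⟩ := extend_orthonormal {i | e i ≠ 0}
      (fun i => (e i)⁻¹ • B i) horth
  refine ⟨P, Wᵀ, e, hP, hW.transpose, he0, ?_, ?_⟩
  · -- A = P * diagonal e * W
    have hDW : Matrix.diagonal e * W = B := by
      ext i k
      rw [Matrix.diagonal_mul]
      by_cases hei : e i = 0
      · have : B i k = 0 := by
          have h2 := hrow i i
          simp only [if_pos rfl, hei] at h2
          have : ∑ k, B i k ^ 2 = 0 := by simpa [pow_two] using h2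
          have := (Finset.sum_eq_zero_iff_of_nonneg (fun k _ => sq_nonneg (B i k))).mp this k (Finset.mem_univ k)
          exact pow_eq_zero_iff (two_ne_zero) |>.mp this
        simp [hei, this]
      · have := congrFun (hWv i hei) k
        simp only [Pi.smul_apply, smul_eq_mul] at this
        rw [this, ← mul_assoc, mul_inv_cancel₀ hei, one_mul]
    rw [Matrix.transpose_transpose, mul_assoc, hDW, hB, ← mul_assoc, hP.2, one_mul]
  · -- nuclear A = ∑ e
    have : nuclear A = S.trace := rfl
    rw [this, hSP, Matrix.trace_mul_cycle, hP.1, one_mul, Matrix.trace_diagonal]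

lemma IsOd.mul {P Q : Matrix (Fin d) (Fin d) ℝ} (hP : IsOd P) (hQ : IsOd Q) : IsOd (P * Q) := by
  constructor
  · rw [Matrix.transpose_mul]
    calc Qᵀ * Pᵀ * (P * Q) = Qᵀ * (Pᵀ * P) * Q := by simp [Matrix.mul_assoc]
      _ = 1 := by rw [hP.1]; simp [hQ.1]
  · rw [Matrix.transpose_mul]
    calc P * Q * (Qᵀ * Pᵀ) = P * (Q * Qᵀ) * Pᵀ := by simp [Matrix.mul_assoc]
      _ = 1 := by rw [hQ.2]; simp [hP.2]

lemma orth_entry_le {R : Matrix (Fin d) (Fin d) ℝ} (hR : IsOd R) (i j : Fin d) :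
    |R i j| ≤ 1 := by
  have hcol : ∑ a, R a j ^ 2 = 1 := by
    have : (Rᵀ * R) j j = 1 := by rw [hR.1]; simp [Matrix.one_apply]
    rw [← this]; simp [Matrix.mul_apply, pow_two]
  have hsq : R i j ^ 2 ≤ 1 := by
    rw [← hcol]
    exact Finset.single_le_sum (fun a _ => sq_nonneg (R a j)) (Finset.mem_univ i)
  nlinarith [abs_nonneg (R i j), sq_abs (R i j)]

lemma trace_le_of_det_neg {R : Matrix (Fin d) (Fin d) ℝ} (hR : IsOd R) (hdet : R.det = -1) :
    R.trace ≤ (d : ℝ) - 2 := by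
  classical
  have hd : 0 < d := by
    rcases Nat.eq_zero_or_pos d with h | h
    · exfalso; subst h
      have : R.det = 1 := Matrix.det_isEmpty
      rw [hdet] at this; norm_num at this
    · exact h
  -- det (R + 1) = 0
  have hdet0 : (R + 1).det = 0 := by
    have h1 : R * (1 + Rᵀ) = R + 1 := by
      rw [Matrix.mul_add, mul_one, hR.2]
    have h2 : (R + 1).det = R.det * (1 + Rᵀ).det := by rw [← h1, Matrix.det_mul]
    have h3 : (1 + Rᵀ).det = (R + 1).det := by
      rw [show (1 + Rᵀ) = (R + 1)ᵀ by rw [Matrix.transpose_add]; simp [add_comm]]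
      exact Matrix.det_transpose _
    rw [h3, hdet] at h2
    linarith
  obtain ⟨v, hv0, hvR⟩ := (Matrix.exists_mulVec_eq_zero_iff).mpr hdet0
  -- normalize
  have hvsum : 0 < ∑ a, v a ^ 2 := by
    rcases Function.ne_iff.mp hv0 with ⟨a, ha⟩
    have : 0 < v a ^ 2 := pow_two_pos_of_ne_zero ha
    exact lt_of_lt_of_le this (Finset.single_le_sum (fun b _ => sq_nonneg (v b)) (Finset.mem_univ a))
  set c : ℝ := (Real.sqrt (∑ a, v a ^ 2))⁻¹ with hc
  set u : Fin d → ℝ := fun a => c * v a with hu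
  have hcpos : 0 < c := by
    rw [hc]; exact inv_pos.mpr (Real.sqrt_pos.mpr hvsum)
  have huu : ∑ a, u a * u a = 1 := by
    have : ∑ a, u a * u a = c ^ 2 * ∑ a, v a ^ 2 := by
      rw [Finset.mul_sum]; congr 1; funext a; simp [hu]; ring
    rw [this, hc]
    rw [sq, ← mul_inv]
    rw [Real.mul_self_sqrt hvsum.le]
    exact inv_mul_cancel₀ (ne_of_gt hvsum)
  have hRu : R *ᵥ u = -u := by
    have h5 : R *ᵥ v + v = 0 := by
      have : (R + 1) *ᵥ v = R *ᵥ v + v := by rw [Matrix.add_mulVec, Matrix.one_mulVec]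
      rw [← this, hvR]
    funext a
    have h6 : (R *ᵥ v) a = - v a := by
      have := congrFun h5 a; simp at this; linarith
    simp [hu, Matrix.mulVec, dotProduct, Finset.mul_sum]
    have h7 : ∑ b, R a b * (c * v b) = c * ∑ b, R a b * v b := by
      rw [Finset.mul_sum]; congr 1; funext b; ring
    rw [h7]
    have : ∑ b, R a b * v b = - v a := h6
    rw [this]; ring
  -- extend u to orthogonal W with row i₀ = u
  set i₀ : Fin d := ⟨0, hd⟩
  obtain ⟨W, hW, hWu⟩ := extend_orthonormal {i₀} (fun _ => u)
    (by intro i hi j hj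
        simp only [Set.mem_singleton_iff] at hi hj
        subst hi; subst hj; simp [huu])
  set M := W * R * Wᵀ with hM
  have hMo : IsOd M := (hW.mul hR).mul ⟨by rw [Matrix.transpose_transpose]; exact hW.2,
    by rw [Matrix.transpose_transpose]; exact hW.1⟩
  have htr : M.trace = R.trace := by
    rw [hM, Matrix.trace_mul_cycle, hW.1, one_mul]
  have hM00 : M i₀ i₀ = -1 := by
    have hWrow : ∀ a, W i₀ a = u a := fun a => congrFun (hWu i₀ rfl) a
    calc M i₀ i₀ = ∑ b, (∑ a, W i₀ a * R a b) * W i₀ b := by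
          simp [hM, Matrix.mul_apply, Matrix.transpose_apply]
      _ = ∑ b, ∑ a, u a * R a b * u b := by
          congr 1; funext b
          rw [Finset.sum_mul]; congr 1; funext a; rw [hWrow a, hWrow b]
      _ = ∑ a, ∑ b, u a * R a b * u b := Finset.sum_comm
      _ = ∑ a, u a * ((R *ᵥ u) a) := by
          congr 1; funext a
          simp only [Matrix.mulVec, dotProduct, Finset.mul_sum]
          congr 1; funext b; ring
      _ = -∑ a, u a * u a := by
          rw [hRu]; rw [← Finset.sum_neg_distrib]; congr 1; funext a; simp
      _ = -1 := by rw [huu]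
  have hdiag : ∀ i, M i i ≤ 1 := fun i => le_trans (le_abs_self _) (orth_entry_le hMo i i)
  have hsum : M.trace = M i₀ i₀ + ∑ i ∈ Finset.univ.erase i₀, M i i := by
    rw [Matrix.trace]
    exact (Finset.add_sum_erase Finset.univ (fun i => M i i) (Finset.mem_univ i₀)).symm
  have hbound : ∑ i ∈ Finset.univ.erase i₀, M i i ≤ (d : ℝ) - 1 := by
    calc ∑ i ∈ Finset.univ.erase i₀, M i i ≤ (Finset.univ.erase i₀).card • (1:ℝ) :=
          Finset.sum_le_card_nsmul _ _ 1 (fun i _ => hdiag i)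
      _ = (d : ℝ) - 1 := by
          rw [Finset.card_erase_of_mem (Finset.mem_univ i₀)]
          simp [Finset.card_univ]
          push_cast [Nat.cast_sub hd]
          ring
  rw [← htr, hsum, hM00]
  linarith

lemma orth_sumsq {P : Matrix (Fin d) (Fin d) ℝ} (hP : Pᵀ * P = 1) (x : Fin d → ℝ) :
    ∑ a, ((P *ᵥ x) a) ^ 2 = ∑ a, (x a) ^ 2 := by
  have h1 : ∑ a, ((P *ᵥ x) a) ^ 2 = (P *ᵥ x) ⬝ᵥ (P *ᵥ x) := by
    simp [dotProduct, pow_two]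
  have h2 : ∑ a, (x a) ^ 2 = x ⬝ᵥ x := by simp [dotProduct, pow_two]
  rw [h1, h2, dotProduct_mulVec, Matrix.vecMul_mulVec, hP]
  simp [Matrix.vecMul_one]

lemma sigmaMin_svd {A P Q : Matrix (Fin d) (Fin d) ℝ} {e : Fin d → ℝ}
    (hP : IsOd P) (hQ : IsOd Q) (he0 : ∀ i, 0 ≤ e i)
    (hA : A = P * Matrix.diagonal e * Qᵀ) (i₀ : Fin d) (hmin : ∀ i, e i₀ ≤ e i) :
    sigmaMin A = e i₀ := by
  classical
  have hAv : ∀ x : Fin d → ℝ, ∑ a, ((A *ᵥ x) a) ^ 2 = ∑ i, e i ^ 2 * ((Qᵀ *ᵥ x) i) ^ 2 := by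
    intro x
    have h1 : A *ᵥ x = P *ᵥ (Matrix.diagonal e *ᵥ (Qᵀ *ᵥ x)) := by
      rw [hA]; rw [Matrix.mulVec_mulVec, Matrix.mulVec_mulVec]
    rw [h1, orth_sumsq hP.1]
    congr 1; funext i
    rw [Matrix.mulVec_diagonal]
    ring
  have hsphere : ∀ x : Fin d → ℝ, (∑ a, (x a)^2 = 1) → ∑ i, ((Qᵀ *ᵥ x) i)^2 = 1 := by
    intro x hx
    rw [orth_sumsq (by rw [Matrix.transpose_transpose]; exact hQ.2) x, hx]
  apply le_antisymm
  · -- pick the witness v := Q *ᵥ single i₀ 1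
    set v : Fin d → ℝ := Q *ᵥ Pi.single i₀ (1:ℝ) with hv
    have hsingle : ∑ a : Fin d, ((Pi.single i₀ (1:ℝ) : Fin d → ℝ) a) ^ 2 = 1 := by
      rw [Finset.sum_eq_single i₀]
      · simp
      · intro b _ hb; rw [Pi.single_eq_of_ne hb]; simp
      · intro h; exact absurd (Finset.mem_univ i₀) h
    have hvunit : ∑ a, (v a) ^ 2 = 1 := by
      rw [hv, orth_sumsq hQ.1, hsingle]
    have hQv : Qᵀ *ᵥ v = Pi.single i₀ 1 := by
      rw [hv, Matrix.mulVec_mulVec, hQ.1, Matrix.one_mulVec]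
    have hval : Real.sqrt (∑ a, ((A *ᵥ v) a) ^ 2) = e i₀ := by
      rw [hAv v, hQv]
      have h8 : ∑ i : Fin d, e i ^ 2 * ((Pi.single i₀ (1:ℝ) : Fin d → ℝ) i) ^ 2 = e i₀ ^ 2 := by
        rw [Finset.sum_eq_single i₀]
        · simp
        · intro b _ hb; rw [Pi.single_eq_of_ne hb]; simp
        · intro h; exact absurd (Finset.mem_univ i₀) h
      rw [h8, Real.sqrt_sq (he0 i₀)]
    calc sigmaMin A ≤ Real.sqrt (∑ a, ((A *ᵥ ((⟨v, hvunit⟩ : {v : Fin d → ℝ // ∑ a, (v a) ^ 2 = 1}) : {v : Fin d → ℝ // ∑ a, (v a) ^ 2 = 1}).1) a) ^ 2) := by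
          apply ciInf_le
          exact ⟨0, by rintro y ⟨w, rfl⟩; exact Real.sqrt_nonneg _⟩
      _ = e i₀ := hval
  · -- lower bound
    have : Nonempty {v : Fin d → ℝ // ∑ a, (v a) ^ 2 = 1} := by
      refine ⟨⟨(Pi.single i₀ (1:ℝ) : Fin d → ℝ), ?_⟩⟩
      rw [Finset.sum_eq_single i₀]
      · simp
      · intro b _ hb; rw [Pi.single_eq_of_ne hb]; simp
      · intro h; exact absurd (Finset.mem_univ i₀) h
    apply le_ciInf
    rintro ⟨x, hx⟩
    have h3 : e i₀ ^ 2 ≤ ∑ a, ((A *ᵥ x) a) ^ 2 := by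
      rw [hAv x]
      calc e i₀ ^ 2 = ∑ i, e i₀ ^ 2 * ((Qᵀ *ᵥ x) i) ^ 2 := by
            rw [← Finset.mul_sum, hsphere x hx, mul_one]
        _ ≤ ∑ i, e i ^ 2 * ((Qᵀ *ᵥ x) i) ^ 2 := by
            apply Finset.sum_le_sum
            intro i _
            exact mul_le_mul_of_nonneg_right (pow_le_pow_left₀ (he0 i₀) (hmin i) 2)
              (sq_nonneg _)
    calc e i₀ = Real.sqrt (e i₀ ^ 2) := (Real.sqrt_sq (he0 i₀)).symm
      _ ≤ Real.sqrt (∑ a, ((A *ᵥ x) a) ^ 2) := Real.sqrt_le_sqrt h3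

/-- trace (diagonal e * R) = ∑ e i * R i i -/

lemma trace_diag_mul (e : Fin d → ℝ) (R : Matrix (Fin d) (Fin d) ℝ) :
    (Matrix.diagonal e * R).trace = ∑ i, e i * R i i := by
  rw [Matrix.trace]
  congr 1; funext i
  simp [Matrix.diag, Matrix.diagonal_mul]

lemma det_orth {P : Matrix (Fin d) (Fin d) ℝ} (hP : IsOd P) : P.det * P.det = 1 := by
  have := congrArg Matrix.det hP.1
  rwa [Matrix.det_mul, Matrix.det_transpose, Matrix.det_one] at this

/-- The Procrustes value over SO(d). -/

lemma procrustes (A : Matrix (Fin d) (Fin d) ℝ) :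
    (∀ X, IsSOd X → (A * Xᵀ).trace ≤
        nuclear A - (if A.det < 0 then 2 * sigmaMin A else 0)) ∧
    (∃ X, IsSOd X ∧ (A * Xᵀ).trace =
        nuclear A - (if A.det < 0 then 2 * sigmaMin A else 0)) := by
  classical
  obtain ⟨P, Q, e, hP, hQ, he0, hA, hnuc⟩ := exists_svd A
  -- trace identity
  have htr : ∀ X : Matrix (Fin d) (Fin d) ℝ,
      (A * Xᵀ).trace = (Matrix.diagonal e * (Qᵀ * Xᵀ * P)).trace := by
    intro X
    rw [hA]
    rw [show P * Matrix.diagonal e * Qᵀ * Xᵀ = P * (Matrix.diagonal e * Qᵀ * Xᵀ) by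
      simp only [Matrix.mul_assoc]]
    rw [Matrix.trace_mul_comm]
    simp only [Matrix.mul_assoc]
  have hdetA : A.det = (P.det * Q.det) * ∏ i, e i := by
    rw [hA, Matrix.det_mul, Matrix.det_mul, Matrix.det_transpose, Matrix.det_diagonal]
    ring
  have hRorth : ∀ X : Matrix (Fin d) (Fin d) ℝ, IsOd X → IsOd (Qᵀ * Xᵀ * P) :=
    fun X hX => (hQ.transpose.mul hX.transpose).mul hP
  have hdetR : ∀ X : Matrix (Fin d) (Fin d) ℝ, (Qᵀ * Xᵀ * P).det = Q.det * X.det * P.det := by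
    intro X
    rw [Matrix.det_mul, Matrix.det_mul, Matrix.det_transpose, Matrix.det_transpose]
  -- generic bound: trace(D R) ≤ ∑ e for orth R
  have hbound1 : ∀ R : Matrix (Fin d) (Fin d) ℝ, IsOd R →
      (Matrix.diagonal e * R).trace ≤ ∑ i, e i := by
    intro R hR
    rw [trace_diag_mul]
    apply Finset.sum_le_sum
    intro i _
    have h1 : R i i ≤ 1 := le_trans (le_abs_self _) (orth_entry_le hR i i)
    nlinarith [he0 i]
  -- bound with det = -1
  have hbound2 : ∀ R : Matrix (Fin d) (Fin d) ℝ, IsOd R → R.det = -1 →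
      ∀ i₀ : Fin d, (∀ i, e i₀ ≤ e i) →
      (Matrix.diagonal e * R).trace ≤ (∑ i, e i) - 2 * e i₀ := by
    intro R hR hdet i₀ hmin
    rw [trace_diag_mul]
    have key : (∑ i, e i) - ∑ i, e i * R i i = ∑ i, e i * (1 - R i i) := by
      rw [← Finset.sum_sub_distrib]; congr 1; funext i; ring
    have hterm : ∀ i, e i₀ * (1 - R i i) ≤ e i * (1 - R i i) := by
      intro i
      have h1 : R i i ≤ 1 := le_trans (le_abs_self _) (orth_entry_le hR i i)
      exact mul_le_mul_of_nonneg_right (hmin i) (by linarith)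
    have h2 : e i₀ * ((d:ℝ) - R.trace) ≤ ∑ i, e i * (1 - R i i) := by
      have : ∑ i, e i₀ * (1 - R i i) ≤ ∑ i, e i * (1 - R i i) :=
        Finset.sum_le_sum (fun i _ => hterm i)
      calc e i₀ * ((d:ℝ) - R.trace) = ∑ i, e i₀ * (1 - R i i) := by
            rw [Finset.sum_congr rfl (fun i (_ : i ∈ Finset.univ) => mul_sub (e i₀) 1 (R i i)),
              Finset.sum_sub_distrib]
            simp only [mul_one, Finset.sum_const, Finset.card_univ, Fintype.card_fin,
              nsmul_eq_mul, ← Finset.mul_sum]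
            rw [Matrix.trace]
            simp only [Matrix.diag]
            ring
        _ ≤ _ := this
    have h3 : 2 * e i₀ ≤ e i₀ * ((d:ℝ) - R.trace) := by
      have := trace_le_of_det_neg hR hdet
      have h0 := he0 i₀
      nlinarith
    linarith [key, h2, h3]
  -- the diagonal flip matrix
  have flip : ∀ i₁ : Fin d, IsOd (Matrix.diagonal (fun i => if i = i₁ then (-1:ℝ) else 1)) ∧
      (Matrix.diagonal (fun i => if i = i₁ then (-1:ℝ) else 1)).det = -1 ∧
      (Matrix.diagonal e * Matrix.diagonal (fun i => if i = i₁ then (-1:ℝ) else 1)).trace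
        = (∑ i, e i) - 2 * e i₁ := by
    intro i₁
    refine ⟨⟨?_, ?_⟩, ?_, ?_⟩
    · rw [Matrix.diagonal_transpose, Matrix.diagonal_mul_diagonal]
      ext i j
      by_cases h : i = i₁ <;> simp [Matrix.diagonal_apply, h, Matrix.one_apply]
    · rw [Matrix.diagonal_transpose, Matrix.diagonal_mul_diagonal]
      ext i j
      by_cases h : i = i₁ <;> simp [Matrix.diagonal_apply, h, Matrix.one_apply]
    · rw [Matrix.det_diagonal]
      rw [Finset.prod_eq_single i₁ (fun b _ hb => by simp [hb]) (fun h => absurd (Finset.mem_univ i₁) h)]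
      simp
    · rw [trace_diag_mul]
      have : ∀ i, e i * (Matrix.diagonal (fun i => if i = i₁ then (-1:ℝ) else 1)) i i
          = e i - 2 * (if i = i₁ then e i₁ else 0) := by
        intro i
        by_cases h : i = i₁ <;> simp [Matrix.diagonal_apply, h] <;> ring
      rw [Finset.sum_congr rfl (fun i _ => this i), Finset.sum_sub_distrib]
      simp
  have hPQsq : (P.det * Q.det) * (P.det * Q.det) = 1 := by
    have h1 := det_orth hP
    have h2 := det_orth hQ
    nlinarith
  have hprod0 : 0 ≤ ∏ i, e i := Finset.prod_nonneg (fun i _ => he0 i)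
  by_cases hneg : A.det < 0
  · -- negative determinant case
    have hd : 0 < d := by
      rcases Nat.eq_zero_or_pos d with h | h
      · exfalso
        subst h
        have : A.det = 1 := Matrix.det_isEmpty
        rw [this] at hneg; norm_num at hneg
      · exact h
    obtain ⟨i₀, _, hmin'⟩ := Finset.exists_min_image Finset.univ e ⟨⟨0, hd⟩, Finset.mem_univ _⟩
    have hmin : ∀ i, e i₀ ≤ e i := fun i => hmin' i (Finset.mem_univ i)
    have hsig : sigmaMin A = e i₀ := sigmaMin_svd hP hQ he0 hA i₀ hmin
    have hPQ : P.det * Q.det = -1 := by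
      rcases mul_self_eq_one_iff.mp hPQsq with h | h
      · exfalso
        rw [hdetA, h, one_mul] at hneg
        linarith
      · exact h
    simp only [if_pos hneg, hsig, hnuc]
    constructor
    · intro X hX
      rw [htr X]
      have hdR : (Qᵀ * Xᵀ * P).det = -1 := by
        rw [hdetR, hX.2]
        calc Q.det * 1 * P.det = P.det * Q.det := by ring
          _ = -1 := hPQ
      have := hbound2 _ (hRorth X hX.1) hdR i₀ hmin
      linarith
    · set R₀ := Matrix.diagonal (fun i => if i = i₀ then (-1:ℝ) else 1) with hR₀
      obtain ⟨hR₀o, hR₀det, hR₀tr⟩ := flip i₀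
      refine ⟨P * R₀ᵀ * Qᵀ, ⟨(hP.mul hR₀o.transpose).mul hQ.transpose, ?_⟩, ?_⟩
      · rw [Matrix.det_mul, Matrix.det_mul, Matrix.det_transpose, Matrix.det_transpose, hR₀det]
        calc P.det * -1 * Q.det = -(P.det * Q.det) := by ring
          _ = 1 := by rw [hPQ]; ring
      · rw [htr]
        have hXt : (P * R₀ᵀ * Qᵀ)ᵀ = Q * R₀ * Pᵀ := by
          rw [Matrix.transpose_mul, Matrix.transpose_mul]
          rw [Matrix.transpose_transpose, Matrix.transpose_transpose]
          simp only [Matrix.mul_assoc]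
        rw [hXt]
        have hRid : Qᵀ * (Q * R₀ * Pᵀ) * P = R₀ := by
          rw [show Qᵀ * (Q * R₀ * Pᵀ) * P = (Qᵀ * Q) * R₀ * (Pᵀ * P) by
            simp only [Matrix.mul_assoc], hQ.1, hP.1, one_mul, mul_one]
        rw [hRid, hR₀tr]
  · -- nonnegative determinant case
    have hAdet0 : 0 ≤ A.det := not_lt.mp hneg
    simp only [if_neg hneg, hnuc, sub_zero]
    constructor
    · intro X hX
      rw [htr X]
      exact hbound1 _ (hRorth X hX.1)
    · by_cases hPQ1 : P.det * Q.det = 1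
      · refine ⟨P * Qᵀ, ⟨hP.mul hQ.transpose, ?_⟩, ?_⟩
        · rw [Matrix.det_mul, Matrix.det_transpose]; exact hPQ1
        · rw [htr]
          have hXt : (P * Qᵀ)ᵀ = Q * Pᵀ := by
            rw [Matrix.transpose_mul, Matrix.transpose_transpose]
          rw [hXt]
          have hRid : Qᵀ * (Q * Pᵀ) * P = 1 := by
            rw [show Qᵀ * (Q * Pᵀ) * P = (Qᵀ * Q) * (Pᵀ * P) by simp only [Matrix.mul_assoc],
              hQ.1, hP.1, one_mul]
          rw [hRid, mul_one, Matrix.trace_diagonal]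
      · have hPQ : P.det * Q.det = -1 := by
          rcases mul_self_eq_one_iff.mp hPQsq with h | h
          · exact absurd h hPQ1
          · exact h
        have hprodz : ∏ i, e i = 0 := by
          rw [hdetA, hPQ] at hAdet0
          linarith [hprod0, hAdet0]
        obtain ⟨i₁, _, hi₁⟩ := Finset.prod_eq_zero_iff.mp hprodz
        set R₀ := Matrix.diagonal (fun i => if i = i₁ then (-1:ℝ) else 1) with hR₀
        obtain ⟨hR₀o, hR₀det, hR₀tr⟩ := flip i₁
        refine ⟨P * R₀ᵀ * Qᵀ, ⟨(hP.mul hR₀o.transpose).mul hQ.transpose, ?_⟩, ?_⟩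
        · rw [Matrix.det_mul, Matrix.det_mul, Matrix.det_transpose, Matrix.det_transpose, hR₀det]
          calc P.det * -1 * Q.det = -(P.det * Q.det) := by ring
            _ = 1 := by rw [hPQ]; ring
        · rw [htr]
          have hXt : (P * R₀ᵀ * Qᵀ)ᵀ = Q * R₀ * Pᵀ := by
            rw [Matrix.transpose_mul, Matrix.transpose_mul]
            rw [Matrix.transpose_transpose, Matrix.transpose_transpose]
            simp only [Matrix.mul_assoc]
          rw [hXt]
          have hRid : Qᵀ * (Q * R₀ * Pᵀ) * P = R₀ := by
            rw [show Qᵀ * (Q * R₀ * Pᵀ) * P = (Qᵀ * Q) * R₀ * (Pᵀ * P) by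
              simp only [Matrix.mul_assoc], hQ.1, hP.1, one_mul, mul_one]
          rw [hRid, hR₀tr, hi₁]
          ring

lemma trace_mul_transpose_eq (A X : Matrix (Fin d) (Fin d) ℝ) :
    (A * Xᵀ).trace = ∑ i, ∑ j, A i j * X i j := by
  simp [Matrix.trace, Matrix.diag, Matrix.mul_apply]

lemma frobSq_orth {X : Matrix (Fin d) (Fin d) ℝ} (hX : IsOd X) :
    ∑ i, ∑ j, (X i j) ^ 2 = (d : ℝ) := by
  have h1 : ∀ i, ∑ j, (X i j) ^ 2 = (X * Xᵀ) i i := by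
    intro i; simp [Matrix.mul_apply, pow_two]
  rw [Finset.sum_congr rfl (fun i _ => h1 i)]
  have : ∑ i, (X * Xᵀ) i i = (X * Xᵀ).trace := rfl
  rw [this, hX.2, Matrix.trace_one]
  simp

lemma frob_compare {A X Y : Matrix (Fin d) (Fin d) ℝ} (hX : IsOd X) (hY : IsOd Y) :
    frob (X - A) ≤ frob (Y - A) ↔ (A * Yᵀ).trace ≤ (A * Xᵀ).trace := by
  have expand : ∀ Z : Matrix (Fin d) (Fin d) ℝ, IsOd Z →
      ∑ i, ∑ j, ((Z - A) i j) ^ 2 = (d : ℝ) - 2 * (A * Zᵀ).trace + ∑ i, ∑ j, (A i j) ^ 2 := by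
    intro Z hZ
    rw [trace_mul_transpose_eq]
    have h1 : ∀ i j, ((Z - A) i j) ^ 2 = (Z i j) ^ 2 - 2 * (A i j * Z i j) + (A i j) ^ 2 := by
      intro i j; simp [Matrix.sub_apply]; ring
    calc ∑ i, ∑ j, ((Z - A) i j) ^ 2
        = ∑ i, ∑ j, ((Z i j) ^ 2 - 2 * (A i j * Z i j) + (A i j) ^ 2) := by
          congr 1; funext i; congr 1; funext j; exact h1 i j
      _ = (∑ i, ∑ j, (Z i j) ^ 2) - 2 * (∑ i, ∑ j, A i j * Z i j) + ∑ i, ∑ j, (A i j) ^ 2 := by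
          simp only [Finset.sum_add_distrib, Finset.sum_sub_distrib, Finset.mul_sum]
      _ = _ := by rw [frobSq_orth hZ]
  have hnonneg : ∀ Z : Matrix (Fin d) (Fin d) ℝ, (0:ℝ) ≤ ∑ i, ∑ j, ((Z - A) i j) ^ 2 :=
    fun Z => Finset.sum_nonneg fun i _ => Finset.sum_nonneg fun j _ => sq_nonneg _
  rw [frob, frob, Real.sqrt_le_sqrt_iff (hnonneg Y), expand X hX, expand Y hY]
  constructor <;> intro h <;> linarith

/-- characterization of fixed points of `ST_α` on `SO(d)^{⊗n}`.
For `α ≥ 0`, `C` symmetric and `G ∈ SO(d)^{⊗n}` with `C̃ = C + α I`: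
`G ∈ ST_α(G)` iff for each `i`,
`tr(C̃ᵢᵀ G Gᵢᵀ) = ‖C̃ᵢᵀ G‖_* − 2·sᵢ·σ_min(C̃ᵢᵀ G)` where `sᵢ = 1` if
`det(C̃ᵢᵀ G) < 0` and `sᵢ = 0` otherwise. -/
theorem special_orthogonal_fixed_point_characterization {n d : ℕ}
    (C : Matrix (Fin n × Fin d) (Fin n × Fin d) ℝ) (hCsymm : Cᵀ = C)
    (α : ℝ) (hα : 0 ≤ α)
    (Ct : Matrix (Fin n × Fin d) (Fin n × Fin d) ℝ)
    (hCt : Ct = C + α • (1 : Matrix (Fin n × Fin d) (Fin n × Fin d) ℝ))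
    (G : Matrix (Fin n × Fin d) (Fin d) ℝ) (hG : SOdN G) :
    InST Ct G G ↔
      ∀ i : Fin n,
        Matrix.trace ((bcol Ct i)ᵀ * G * (blk G i)ᵀ) =
          nuclear ((bcol Ct i)ᵀ * G) -
            (if ((bcol Ct i)ᵀ * G).det < 0 then 2 * sigmaMin ((bcol Ct i)ᵀ * G) else 0) := by
  classical
  constructor
  · rintro ⟨hSO, hmin⟩ i
    obtain ⟨hub, Xs, hXs, hval⟩ := procrustes ((bcol Ct i)ᵀ * G)
    apply le_antisymm
    · exact hub _ (hG i)
    · rw [← hval]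
      exact (frob_compare (hG i).1 hXs.1).mp (hmin i Xs hXs)
  · intro h
    refine ⟨hG, ?_⟩
    intro i X hX
    refine (frob_compare (hG i).1 hX.1).mpr ?_
    rw [h i]
    exact (procrustes ((bcol Ct i)ᵀ * G)).1 X hX
end GroupSync
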